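/- Let K ⊆ K' be an extension of fields, each complete with respect to a nontrivial non-archimedean absolute value whose valuation ring is a discrete valuation ring, such that the absolute value of K' restricts on K to the absolute value of K. Let R and R' denote the respective valuation rings. Let φ ∈ K⟦X⟧ be a formal power series with zero constant term. Then the supremum of the radii r ∈ (0,1] at which the graph of φ is analytically trivialized over K (with trivializing series in K⟦X₁,X₂⟧ and Jacobian condition relative to R) equals the supremum of the radii r ∈ (0,1] at which the graph of φ, viewed in K'⟦X⟧, is analytically trivialized over K' (with trivializing series in K'⟦X₁,X₂⟧ and Jacobian condition relative to R'). (This is the graph case of Proposition 3.4: the size is invariant under isometric extensions of complete discretely valued fields.) -/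

import Mathlib

noncomputable section

open Filter PowerSeries

namespace NA

/-- The valuation ring `R = {x : K | ‖x‖ ≤ 1}` of a nonarchimedean normed field. -/
def integers (K : Type*) [NormedField K] [IsUltrametricDist K] : Subring K where
  carrier := {x : K | ‖x‖ ≤ 1}
  mul_mem' {a b} ha hb := by
    simp only [Set.mem_setOf_eq, norm_mul] at *
    calc ‖a‖ * ‖b‖ ≤ 1 * 1 := mul_le_mul ha hb (norm_nonneg _) zero_le_one
    _ = 1 := one_mul 1
  one_mem' := by simp
  add_mem' {a b} ha hb := (IsUltrametricDist.norm_add_le_max a b).trans (max_le ha hb)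
  zero_mem' := by simp
  neg_mem' {a} ha := by simpa using ha

/-- Composition `φ ∘ ψ` of formal power series in one variable
(this gives `φ(ψ)` whenever `ψ` has zero constant term). -/
def comp {K : Type*} [CommSemiring K] (φ ψ : PowerSeries K) : PowerSeries K :=
  PowerSeries.mk fun n =>
    ∑ k ∈ Finset.range (n + 1), PowerSeries.coeff k φ * PowerSeries.coeff n (ψ ^ k)

/-- The one-variable series `T ↦ f(T, 0)` obtained from a two-variable series `f`. -/
def line1 {K : Type*} [CommSemiring K] (f : MvPowerSeries (Fin 2) K) : PowerSeries K :=
  PowerSeries.mk fun n => MvPowerSeries.coeff (Finsupp.single (0 : Fin 2) n) f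

/-- The statement `‖f‖_r ≤ c`, where `‖f‖_r = sup_I ‖a_I‖ r^{|I|}` is the Gauss norm of the
multivariate formal power series `f = Σ_I a_I X^I`. -/
def NormLE {K : Type*} [NormedField K] {N : ℕ} (r : ℝ) (f : MvPowerSeries (Fin N) K)
    (c : ℝ) : Prop :=
  ∀ I : Fin N →₀ ℕ, ‖MvPowerSeries.coeff I f‖ * r ^ (∑ j, I j) ≤ c

/-- The graph of `φ` is analytically trivialized at radius `r`: there is a pair
`f = (f₁, f₂)` of two-variable power series, vanishing at the origin, with `‖f_j‖_r ≤ r`,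
whose Jacobian matrix at the origin lies in `GL₂(R)` (entries of norm `≤ 1`, determinant of
norm `1`), and such that `f₂(T,0) = φ(f₁(T,0))`. -/
def GraphTrivAt {K : Type*} [NormedField K] (φ : PowerSeries K) (r : ℝ) : Prop :=
  ∃ f₁ f₂ : MvPowerSeries (Fin 2) K,
    MvPowerSeries.constantCoeff f₁ = 0 ∧
    MvPowerSeries.constantCoeff f₂ = 0 ∧
    NormLE r f₁ r ∧ NormLE r f₂ r ∧
    ‖MvPowerSeries.coeff (Finsupp.single (0 : Fin 2) 1) f₁‖ ≤ 1 ∧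
    ‖MvPowerSeries.coeff (Finsupp.single (1 : Fin 2) 1) f₁‖ ≤ 1 ∧
    ‖MvPowerSeries.coeff (Finsupp.single (0 : Fin 2) 1) f₂‖ ≤ 1 ∧
    ‖MvPowerSeries.coeff (Finsupp.single (1 : Fin 2) 1) f₂‖ ≤ 1 ∧
    ‖MvPowerSeries.coeff (Finsupp.single (0 : Fin 2) 1) f₁ *
        MvPowerSeries.coeff (Finsupp.single (1 : Fin 2) 1) f₂ -
      MvPowerSeries.coeff (Finsupp.single (1 : Fin 2) 1) f₁ *
        MvPowerSeries.coeff (Finsupp.single (0 : Fin 2) 1) f₂‖ = 1 ∧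
    line1 f₂ = comp φ (line1 f₁)

end NA

namespace NA
open Finset PowerSeries

/-! ### Basic lemmas about `comp` -/

section CompBasic
variable {K : Type*} [CommRing K]

lemma coeff_comp (φ ψ : PowerSeries K) (n : ℕ) :
    coeff n (comp φ ψ) = ∑ k ∈ range (n + 1), coeff k φ * coeff n (ψ ^ k) := by
  simp [comp]

lemma coeff_pow_eq_zero {ψ : PowerSeries K} (h0 : constantCoeff ψ = 0) :
    ∀ {k n : ℕ}, n < k → coeff n (ψ ^ k) = 0 := by
  intro k
  induction k with
  | zero => intro n hn; omega
  | succ k ih =>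
    intro n hn
    rw [pow_succ, coeff_mul]
    apply Finset.sum_eq_zero
    rintro ⟨i, j⟩ hij
    rw [Finset.HasAntidiagonal.mem_antidiagonal] at hij
    rcases lt_or_ge i k with h | h
    · rw [ih h, zero_mul]
    · have hj : j = 0 := by omega
      subst hj
      rw [coeff_zero_eq_constantCoeff, h0, mul_zero]

lemma coeff_pow_self {ψ : PowerSeries K} (h0 : constantCoeff ψ = 0) (n : ℕ) :
    coeff n (ψ ^ n) = (coeff 1 ψ) ^ n := by
  induction n with
  | zero => simp
  | succ n ih =>
    rw [pow_succ, coeff_mul, Finset.sum_eq_single (n, 1)]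
    · rw [ih, ← pow_succ]
    · rintro ⟨i, j⟩ hij hne
      rw [Finset.HasAntidiagonal.mem_antidiagonal] at hij
      rcases lt_or_ge i n with h | h
      · rw [coeff_pow_eq_zero h0 h, zero_mul]
      · have hne' : ¬(i = n ∧ j = 1) := by
          rintro ⟨h1, h2⟩; exact hne (by simp [h1, h2])
        have : i = n + 1 ∧ j = 0 := by omega
        obtain ⟨hi, hj⟩ := this
        subst hi; subst hj
        rw [coeff_zero_eq_constantCoeff, h0, mul_zero]
    · intro h
      exact absurd (Finset.HasAntidiagonal.mem_antidiagonal.2 (by omega)) h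

lemma constantCoeff_comp (φ ψ : PowerSeries K) :
    constantCoeff (comp φ ψ) = constantCoeff φ := by
  rw [← coeff_zero_eq_constantCoeff, coeff_comp]
  simp

lemma comp_X (φ : PowerSeries K) : comp φ X = φ := by
  ext n
  rw [coeff_comp, Finset.sum_eq_single n]
  · rw [coeff_X_pow, if_pos rfl, mul_one]
  · intro k _ hk
    rw [coeff_X_pow, if_neg (fun h => hk h.symm), mul_zero]
  · intro h; exact absurd (Finset.mem_range.2 (by omega)) h

lemma X_comp {ψ : PowerSeries K} (h0 : constantCoeff ψ = 0) : comp X ψ = ψ := by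
  ext n
  rw [coeff_comp]
  rcases Nat.eq_zero_or_pos n with hn | hn
  · subst hn
    simp [coeff_zero_eq_constantCoeff, h0]
  · rw [Finset.sum_eq_single 1]
    · rw [coeff_X, if_pos rfl, pow_one, one_mul]
    · intro k _ hk
      rw [coeff_X, if_neg hk, zero_mul]
    · intro h; exact absurd (Finset.mem_range.2 (by omega)) h

lemma map_comp {L : Type*} [CommRing L] (ι : K →+* L) (a b : PowerSeries K) :
    PowerSeries.map ι (comp a b) = comp (PowerSeries.map ι a) (PowerSeries.map ι b) := by
  ext n
  rw [PowerSeries.coeff_map, coeff_comp, coeff_comp, map_sum]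
  apply Finset.sum_congr rfl
  intro k _
  rw [map_mul, PowerSeries.coeff_map, ← map_pow, PowerSeries.coeff_map]

lemma triangle_sum (n : ℕ) (G : ℕ × ℕ → K) (hG : ∀ p : ℕ × ℕ, n < p.1 + p.2 → G p = 0) :
    ∑ k ∈ range (n + 1), ∑ p ∈ antidiagonal k, G p
      = ∑ p ∈ range (n + 1) ×ˢ range (n + 1), G p := by
  rw [← Finset.sum_biUnion]
  · apply Finset.sum_subset
    · intro p hp
      rw [Finset.mem_biUnion] at hp
      obtain ⟨k, hk, hpk⟩ := hp
      rw [Finset.HasAntidiagonal.mem_antidiagonal] at hpk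
      rw [Finset.mem_range] at hk
      rw [Finset.mem_product, Finset.mem_range, Finset.mem_range]
      omega
    · intro p hp hnp
      apply hG
      by_contra h
      push_neg at h
      exact hnp (Finset.mem_biUnion.2 ⟨p.1 + p.2, Finset.mem_range.2 (by omega),
        Finset.HasAntidiagonal.mem_antidiagonal.2 rfl⟩)
  · intro k hk k' hk' hne
    simp only [Finset.disjoint_left]
    intro p hp hp'
    rw [Finset.HasAntidiagonal.mem_antidiagonal] at hp hp'
    exact hne (by omega)

lemma comp_mul (p q c : PowerSeries K) (hc : constantCoeff c = 0) :
    comp (p * q) c = comp p c * comp q c := by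
  ext n
  have hext : ∀ (f : PowerSeries K) (m : ℕ), m ≤ n →
      ∑ i ∈ range (m + 1), coeff i f * coeff m (c ^ i)
        = ∑ i ∈ range (n + 1), coeff i f * coeff m (c ^ i) := by
    intro f m hm
    apply Finset.sum_subset
    · exact Finset.range_subset_range.2 (by omega)
    · intro i _ hi
      rw [Finset.mem_range] at hi
      push_neg at hi
      rw [coeff_pow_eq_zero hc (by omega), mul_zero]
  rw [coeff_mul, coeff_comp]
  have hrhs : ∑ ml ∈ antidiagonal n, coeff ml.1 (comp p c) * coeff ml.2 (comp q c)
      = ∑ ml ∈ antidiagonal n, ∑ i ∈ range (n + 1), ∑ j ∈ range (n + 1),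
          coeff i p * coeff j q * (coeff ml.1 (c ^ i) * coeff ml.2 (c ^ j)) := by
    apply Finset.sum_congr rfl
    rintro ⟨m, l⟩ hml
    rw [Finset.HasAntidiagonal.mem_antidiagonal] at hml
    rw [coeff_comp, coeff_comp, hext p m (by omega), hext q l (by omega),
      Finset.sum_mul_sum]
    apply Finset.sum_congr rfl; intro i _
    apply Finset.sum_congr rfl; intro j _
    ring
  rw [hrhs]
  have hlhs : ∑ k ∈ range (n + 1), coeff k (p * q) * coeff n (c ^ k)
      = ∑ k ∈ range (n + 1), ∑ ij ∈ antidiagonal k,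
          (∑ ml ∈ antidiagonal n,
            coeff ij.1 p * coeff ij.2 q * (coeff ml.1 (c ^ ij.1) * coeff ml.2 (c ^ ij.2))) := by
    apply Finset.sum_congr rfl
    intro k _
    rw [coeff_mul, Finset.sum_mul]
    apply Finset.sum_congr rfl
    rintro ⟨i, j⟩ hij
    rw [Finset.HasAntidiagonal.mem_antidiagonal] at hij
    have : (c : PowerSeries K) ^ k = c ^ i * c ^ j := by rw [← pow_add, hij]
    rw [this, coeff_mul, Finset.mul_sum]
  rw [hlhs]
  rw [triangle_sum n _ ?hvanish]
  · rw [Finset.sum_product]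
    have swap_inner : ∀ i ∈ range (n+1),
        (∑ j ∈ range (n + 1), ∑ ml ∈ antidiagonal n,
          coeff i p * coeff j q * (coeff ml.1 (c ^ i) * coeff ml.2 (c ^ j)))
        = ∑ ml ∈ antidiagonal n, ∑ j ∈ range (n + 1),
          coeff i p * coeff j q * (coeff ml.1 (c ^ i) * coeff ml.2 (c ^ j)) := by
      intro i _
      exact Finset.sum_comm
    rw [Finset.sum_congr rfl swap_inner, Finset.sum_comm]
  case hvanish =>
    rintro ⟨i, j⟩ hijn
    apply Finset.sum_eq_zero
    rintro ⟨m, l⟩ hml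
    rw [Finset.HasAntidiagonal.mem_antidiagonal] at hml
    rcases lt_or_ge m i with h | h
    · rw [coeff_pow_eq_zero hc h]; ring
    · rw [coeff_pow_eq_zero hc (show l < j by omega)]; ring

lemma comp_one (c : PowerSeries K) : comp 1 c = 1 := by
  ext n
  rw [coeff_comp, Finset.sum_eq_single 0]
  · simp
  · intro k _ hk
    rw [coeff_one, if_neg hk, zero_mul]
  · intro h; exact absurd (Finset.mem_range.2 (by omega)) h

lemma comp_pow (b c : PowerSeries K) (hc : constantCoeff c = 0) (j : ℕ) :
    comp (b ^ j) c = (comp b c) ^ j := by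
  induction j with
  | zero => simpa using comp_one c
  | succ j ih => rw [pow_succ, comp_mul _ _ _ hc, ih, pow_succ]

lemma comp_assoc (a b c : PowerSeries K) (hb : constantCoeff b = 0)
    (hc : constantCoeff c = 0) :
    comp (comp a b) c = comp a (comp b c) := by
  ext n
  rw [coeff_comp, coeff_comp]
  have hrhs : ∀ j, coeff n ((comp b c) ^ j)
      = ∑ k ∈ range (n + 1), coeff k (b ^ j) * coeff n (c ^ k) := by
    intro j
    rw [← comp_pow b c hc, coeff_comp]
  simp only [hrhs, coeff_comp, Finset.mul_sum, Finset.sum_mul]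
  rw [Finset.sum_comm]
  apply Finset.sum_congr rfl
  intro k hk
  rw [Finset.mem_range] at hk
  have hsub : ∑ i ∈ range (k + 1), coeff i a * coeff k (b ^ i) * coeff n (c ^ k)
      = ∑ i ∈ range (n + 1), coeff i a * coeff k (b ^ i) * coeff n (c ^ k) := by
    apply Finset.sum_subset (Finset.range_subset_range.2 (by omega))
    intro i _ hi
    rw [Finset.mem_range] at hi
    rw [coeff_pow_eq_zero hb (show k < i by omega)]
    ring
  rw [hsub]
  apply Finset.sum_congr rfl
  intro i _
  ring

lemma coeff_pow_congr {b b' : PowerSeries K} (h0 : constantCoeff b = 0)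
    (h0' : constantCoeff b' = 0) {m : ℕ} (h : ∀ j ≤ m, coeff j b = coeff j b') :
    ∀ (k) {n : ℕ}, n < m + k → coeff n (b ^ k) = coeff n (b' ^ k) := by
  intro k
  induction k with
  | zero => intro n _; rfl
  | succ k ih =>
    intro n hn
    rw [pow_succ', pow_succ', coeff_mul, coeff_mul]
    apply Finset.sum_congr rfl
    rintro ⟨i, j⟩ hij
    rw [Finset.HasAntidiagonal.mem_antidiagonal] at hij
    simp only
    rcases Nat.eq_zero_or_pos i with hi | hi
    · subst hi
      rw [coeff_zero_eq_constantCoeff, h0, h0', zero_mul, zero_mul]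
    rcases lt_or_ge j k with hj | hj
    · rw [coeff_pow_eq_zero h0 hj, coeff_pow_eq_zero h0' hj, mul_zero, mul_zero]
    · rw [h i (by omega), ih (by omega)]

end CompBasic

/-! ### The compositional inverse -/

section CompInv
variable {K : Type*} [Field K]

def invAux (φ : PowerSeries K) : ℕ → K
  | 0 => 0
  | 1 => (coeff 1 φ)⁻¹
  | (n+2) => -(coeff 1 φ)⁻¹ * ∑ k ∈ Finset.Icc 2 (n+2), coeff k φ *
      coeff (n+2) ((PowerSeries.mk fun j => if h : j < n + 2 then invAux φ j else 0) ^ k)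

def compInv (φ : PowerSeries K) : PowerSeries K := PowerSeries.mk (invAux φ)

lemma compInv_zero (φ : PowerSeries K) : constantCoeff (compInv φ) = 0 := by
  rw [← coeff_zero_eq_constantCoeff]
  simp [compInv, invAux]

lemma compInv_one (φ : PowerSeries K) : coeff 1 (compInv φ) = (coeff 1 φ)⁻¹ := by
  simp [compInv, invAux]

lemma comp_compInv (φ : PowerSeries K) (hφ0 : constantCoeff φ = 0)
    (hφ1 : coeff 1 φ ≠ 0) : comp φ (compInv φ) = X := by
  ext n
  rw [coeff_comp]
  match n with
  | 0 => simp [hφ0, coeff_zero_eq_constantCoeff]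
  | 1 =>
    rw [Finset.sum_range_succ, Finset.sum_range_one]
    simp [coeff_one, pow_one, compInv_one, hφ0, coeff_zero_eq_constantCoeff,
      mul_inv_cancel₀ hφ1]
  | (m+2) =>
    have hsplit : range (m + 2 + 1) = insert 0 (insert 1 (Finset.Icc 2 (m+2))) := by
      ext x
      simp only [Finset.mem_range, Finset.mem_insert, Finset.mem_Icc]
      omega
    rw [hsplit, Finset.sum_insert (by simp), Finset.sum_insert (by simp)]
    have h0 : coeff 0 φ * coeff (m+2) ((compInv φ) ^ 0) = 0 := by
      rw [coeff_zero_eq_constantCoeff, hφ0, zero_mul]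
    have hcongr : ∀ k ∈ Finset.Icc 2 (m+2),
        coeff k φ * coeff (m+2) ((compInv φ) ^ k)
          = coeff k φ * coeff (m+2)
              ((PowerSeries.mk fun j => if h : j < m + 2 then invAux φ j else 0) ^ k) := by
      intro k hk
      rw [Finset.mem_Icc] at hk
      congr 1
      apply coeff_pow_congr (m := m + 1)
      · exact compInv_zero φ
      · rw [← coeff_zero_eq_constantCoeff]
        simp [invAux]
      · intro j hj
        simp only [compInv, coeff_mk]
        rw [dif_pos (by omega)]
      · omega
    rw [Finset.sum_congr rfl hcongr, h0, pow_one, zero_add]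
    have hψn : coeff (m+2) (compInv φ) = invAux φ (m+2) := by simp [compInv]
    rw [hψn, invAux, coeff_X, if_neg (by omega)]
    field_simp
    ring

lemma coeff_one_comp (g u : PowerSeries K) :
    coeff 1 (comp g u) = coeff 1 g * coeff 1 u := by
  rw [coeff_comp, Finset.sum_range_succ, Finset.sum_range_one]
  simp [coeff_one]

lemma compInv_comp (φ : PowerSeries K) (hφ0 : constantCoeff φ = 0)
    (hφ1 : coeff 1 φ ≠ 0) : comp (compInv φ) φ = X := by
  have hψ0 := compInv_zero φ
  have hψ1 : coeff 1 (compInv φ) ≠ 0 := by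
    rw [compInv_one]; exact inv_ne_zero hφ1
  have hχ := comp_compInv (compInv φ) hψ0 hψ1
  have hassoc := comp_assoc φ (compInv φ) (compInv (compInv φ)) hψ0
    (compInv_zero (compInv φ))
  rw [comp_compInv φ hφ0 hφ1] at hassoc
  rw [X_comp (compInv_zero (compInv φ))] at hassoc
  rw [hχ] at hassoc
  rw [comp_X] at hassoc
  have hgoal : comp (compInv φ) φ = comp (compInv φ) (compInv (compInv φ)) := by
    rw [hassoc]
  rw [hgoal]
  exact hχ

end CompInv

/-! ### Norm estimates -/

section Norms
variable {K : Type*} [NormedField K] [IsUltrametricDist K]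

lemma norm_sub_le_max' (x y : K) : ‖x - y‖ ≤ max ‖x‖ ‖y‖ := by
  rw [sub_eq_add_neg]
  exact (IsUltrametricDist.norm_add_le_max x (-y)).trans (by rw [norm_neg])

lemma norm_coeff_pow_le {ψ : PowerSeries K} {r : ℝ}
    (hr : 0 < r) (hψ : ∀ n, ‖coeff n ψ‖ * r ^ n ≤ r) :
    ∀ (k n : ℕ), ‖coeff n (ψ ^ k)‖ * r ^ n ≤ r ^ k := by
  intro k
  induction k with
  | zero =>
    intro n
    rcases Nat.eq_zero_or_pos n with hn | hn
    · subst hn; simp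
    · rw [pow_zero, coeff_one, if_neg (by omega), pow_zero]
      simp
  | succ k ih =>
    intro n
    rw [pow_succ, coeff_mul]
    have hC : 0 < r ^ n := pow_pos hr n
    rw [← le_div_iff₀ hC]
    apply IsUltrametricDist.norm_sum_le_of_forall_le_of_nonneg (by positivity)
    rintro ⟨i, j⟩ hij
    rw [Finset.HasAntidiagonal.mem_antidiagonal] at hij
    rw [le_div_iff₀ hC, norm_mul]
    calc ‖coeff i (ψ ^ k)‖ * ‖coeff j ψ‖ * r ^ n
        = (‖coeff i (ψ ^ k)‖ * r ^ i) * (‖coeff j ψ‖ * r ^ j) := by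
          rw [← hij, pow_add]; ring
      _ ≤ r ^ k * r := by
          apply mul_le_mul (ih i) (hψ j) (by positivity) (by positivity)
      _ = r ^ (k + 1) := by rw [pow_succ]

lemma descend {g u : PowerSeries K} {r : ℝ} (hr : 0 < r)
    (hg0 : constantCoeff g = 0) (hu0 : constantCoeff u = 0)
    (hu1 : ‖coeff 1 u‖ = 1) (hu : ∀ n, ‖coeff n u‖ * r ^ n ≤ r)
    (h : ∀ n, ‖coeff n (comp g u)‖ * r ^ n ≤ r) :
    ∀ n, ‖coeff n g‖ * r ^ n ≤ r := by
  intro n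
  induction n using Nat.strong_induction_on with
  | _ n ih =>
    rcases Nat.eq_zero_or_pos n with hn | hn
    · subst hn; simp [coeff_zero_eq_constantCoeff, hg0, le_of_lt hr]
    have key : coeff n g * (coeff 1 u) ^ n
        = coeff n (comp g u) - ∑ k ∈ range n, coeff k g * coeff n (u ^ k) := by
      rw [coeff_comp, Finset.sum_range_succ, coeff_pow_self hu0]
      ring
    have hnorm : ‖coeff n g‖ = ‖coeff n g * (coeff 1 u) ^ n‖ := by
      rw [norm_mul, norm_pow, hu1, one_pow, mul_one]
    rw [hnorm, key]
    have hC : 0 < r ^ n := pow_pos hr n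
    rw [← le_div_iff₀ hC]
    apply le_trans (norm_sub_le_max' _ _)
    apply max_le
    · rw [le_div_iff₀ hC]; exact h n
    · apply IsUltrametricDist.norm_sum_le_of_forall_le_of_nonneg (by positivity)
      intro k hk
      rw [Finset.mem_range] at hk
      rw [le_div_iff₀ hC, norm_mul, mul_assoc]
      calc ‖coeff k g‖ * (‖coeff n (u ^ k)‖ * r ^ n)
          ≤ ‖coeff k g‖ * r ^ k := by
            apply mul_le_mul_of_nonneg_left (norm_coeff_pow_le hr hu k n) (norm_nonneg _)
        _ ≤ r := ih k hk

end Norms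

/-! ### Characterization of `GraphTrivAt` via one-variable parametrizations -/

section Char
variable {K : Type*} [NormedField K] [IsUltrametricDist K]

/-- Intrinsic characterization of `GraphTrivAt` via one-variable reparametrizations. -/
def GoodParam (φ : PowerSeries K) (r : ℝ) : Prop :=
  ∃ u : PowerSeries K, constantCoeff u = 0 ∧
    (∀ n, ‖coeff n u‖ * r ^ n ≤ r) ∧
    (∀ n, ‖coeff n (comp φ u)‖ * r ^ n ≤ r) ∧
    (‖coeff 1 u‖ = 1 ∨ ‖coeff 1 (comp φ u)‖ = 1)

lemma single_zero_apply_one (n : ℕ) : (Finsupp.single (0 : Fin 2) n) (1 : Fin 2) = 0 :=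
  Finsupp.single_eq_of_ne (by decide)

lemma sum_single_zero (n : ℕ) : (∑ j, (Finsupp.single (0 : Fin 2) n) j) = n := by
  rw [Fin.sum_univ_two]
  simp [Finsupp.single_eq_of_ne (show (0 : Fin 2) ≠ 1 by decide)]

lemma sum_single_one : (∑ j, (Finsupp.single (1 : Fin 2) 1) j) = 1 := by
  rw [Fin.sum_univ_two]
  simp [Finsupp.single_eq_of_ne (show (1 : Fin 2) ≠ 0 by decide)]

lemma coeff_line1 (f : MvPowerSeries (Fin 2) K) (n : ℕ) :
    coeff n (line1 f) = MvPowerSeries.coeff (Finsupp.single (0 : Fin 2) n) f := by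
  simp [line1]

def build (g : PowerSeries K) (e : K) : MvPowerSeries (Fin 2) K :=
  fun I => if I 1 = 0 then coeff (I 0) g
    else if I = Finsupp.single (1 : Fin 2) 1 then e else 0

lemma single11_apply_one : (Finsupp.single (1 : Fin 2) 1) (1 : Fin 2) = 1 :=
  Finsupp.single_eq_same

lemma build_coeff_single0 (g : PowerSeries K) (e : K) (n : ℕ) :
    MvPowerSeries.coeff (Finsupp.single (0 : Fin 2) n) (build g e) = coeff n g := by
  show (if (Finsupp.single (0 : Fin 2) n) 1 = 0
      then coeff ((Finsupp.single (0 : Fin 2) n) 0) g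
      else if Finsupp.single (0 : Fin 2) n = Finsupp.single (1 : Fin 2) 1 then e else 0)
    = coeff n g
  rw [if_pos (single_zero_apply_one n), Finsupp.single_eq_same]

lemma build_coeff_single1 (g : PowerSeries K) (e : K) :
    MvPowerSeries.coeff (Finsupp.single (1 : Fin 2) 1) (build g e) = e := by
  show (if (Finsupp.single (1 : Fin 2) 1) (1 : Fin 2) = 0
      then coeff ((Finsupp.single (1 : Fin 2) 1) 0) g
      else if Finsupp.single (1 : Fin 2) 1 = Finsupp.single (1 : Fin 2) 1 then e else 0) = e
  rw [if_neg (by rw [single11_apply_one]; norm_num), if_pos rfl]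

lemma build_constantCoeff (g : PowerSeries K) (e : K) :
    MvPowerSeries.constantCoeff (build g e) = coeff 0 g := by
  rw [← MvPowerSeries.coeff_zero_eq_constantCoeff_apply, ← Finsupp.single_zero (0 : Fin 2),
    build_coeff_single0]

lemma build_line1 (g : PowerSeries K) (e : K) : line1 (build g e) = g := by
  ext n
  rw [coeff_line1, build_coeff_single0]

lemma build_normLE (g : PowerSeries K) (e : K) {r : ℝ} (hr : 0 < r)
    (hg : ∀ n, ‖coeff n g‖ * r ^ n ≤ r) (he : ‖e‖ ≤ 1) :
    NormLE r (build g e) r := by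
  intro I
  rw [MvPowerSeries.coeff_apply]
  show ‖if I 1 = 0 then coeff (I 0) g
    else if I = Finsupp.single (1 : Fin 2) 1 then e else 0‖ * r ^ (∑ j, I j) ≤ r
  by_cases h1 : I 1 = 0
  · rw [if_pos h1]
    have hsum : (∑ j, I j) = I 0 := by rw [Fin.sum_univ_two, h1, add_zero]
    rw [hsum]
    exact hg (I 0)
  · rw [if_neg h1]
    by_cases h2 : I = Finsupp.single (1 : Fin 2) 1
    · rw [if_pos h2, h2, sum_single_one, pow_one]
      calc ‖e‖ * r ≤ 1 * r := mul_le_mul_of_nonneg_right he (le_of_lt hr)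
      _ = r := one_mul r
    · rw [if_neg h2]
      simp [le_of_lt hr]

lemma graphTrivAt_iff_goodParam {φ : PowerSeries K} (hφ0 : constantCoeff φ = 0)
    {r : ℝ} (hr : 0 < r) :
    GraphTrivAt φ r ↔ GoodParam φ r := by
  constructor
  · rintro ⟨f₁, f₂, hc1, hc2, hN1, hN2, ha, hb, hc, hd, hdet, hline⟩
    refine ⟨line1 f₁, ?_, ?_, ?_, ?_⟩
    · rw [← coeff_zero_eq_constantCoeff, coeff_line1, Finsupp.single_zero,
        MvPowerSeries.coeff_zero_eq_constantCoeff_apply, hc1]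
    · intro n
      rw [coeff_line1]
      have := hN1 (Finsupp.single (0 : Fin 2) n)
      rwa [sum_single_zero] at this
    · intro n
      rw [← hline, coeff_line1]
      have := hN2 (Finsupp.single (0 : Fin 2) n)
      rwa [sum_single_zero] at this
    · rw [← hline, coeff_line1, coeff_line1]
      by_contra hcon
      push_neg at hcon
      obtain ⟨hna, hnc⟩ := hcon
      have hna' : ‖MvPowerSeries.coeff (Finsupp.single (0 : Fin 2) 1) f₁‖ < 1 :=
        lt_of_le_of_ne ha hna
      have hnc' : ‖MvPowerSeries.coeff (Finsupp.single (0 : Fin 2) 1) f₂‖ < 1 :=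
        lt_of_le_of_ne hc hnc
      have h3 : ‖MvPowerSeries.coeff (Finsupp.single (0 : Fin 2) 1) f₁ *
          MvPowerSeries.coeff (Finsupp.single (1 : Fin 2) 1) f₂‖ < 1 := by
        rw [norm_mul]
        calc _ ≤ ‖MvPowerSeries.coeff (Finsupp.single (0 : Fin 2) 1) f₁‖ * 1 :=
              mul_le_mul_of_nonneg_left hd (norm_nonneg _)
        _ = _ := mul_one _
        _ < 1 := hna'
      have h4 : ‖MvPowerSeries.coeff (Finsupp.single (1 : Fin 2) 1) f₁ *
          MvPowerSeries.coeff (Finsupp.single (0 : Fin 2) 1) f₂‖ < 1 := by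
        rw [norm_mul]
        calc _ ≤ 1 * ‖MvPowerSeries.coeff (Finsupp.single (0 : Fin 2) 1) f₂‖ :=
              mul_le_mul_of_nonneg_right hb (norm_nonneg _)
        _ = _ := one_mul _
        _ < 1 := hnc'
      have := (norm_sub_le_max' _ _).trans_lt (max_lt h3 h4)
      rw [hdet] at this
      exact lt_irrefl 1 this
  · rintro ⟨u, hu0, hu, hv, hcase⟩
    obtain ⟨b, d, hbnorm, hdnorm, hdet⟩ :
        ∃ b d : K, ‖b‖ ≤ 1 ∧ ‖d‖ ≤ 1 ∧
          ‖coeff 1 u * d - b * coeff 1 (comp φ u)‖ = 1 := by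
      rcases hcase with h | h
      · exact ⟨0, 1, by simp, by simp, by simpa using h⟩
      · exact ⟨1, 0, by simp, by simp, by simpa using h⟩
    refine ⟨build u b, build (comp φ u) d, ?_, ?_,
      build_normLE u b hr hu hbnorm, build_normLE (comp φ u) d hr hv hdnorm,
      ?_, ?_, ?_, ?_, ?_, ?_⟩
    · rw [build_constantCoeff, coeff_zero_eq_constantCoeff]
      exact hu0
    · rw [build_constantCoeff, coeff_zero_eq_constantCoeff, constantCoeff_comp]
      exact hφ0
    · rw [build_coeff_single0]
      have := hu 1
      rw [pow_one] at this
      exact le_of_mul_le_mul_right (by simpa [one_mul] using this) hr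
    · rw [build_coeff_single1]; exact hbnorm
    · rw [build_coeff_single0]
      have := hv 1
      rw [pow_one] at this
      exact le_of_mul_le_mul_right (by simpa [one_mul] using this) hr
    · rw [build_coeff_single1]; exact hdnorm
    · rw [build_coeff_single0, build_coeff_single0, build_coeff_single1, build_coeff_single1]
      exact hdet
    · rw [build_line1, build_line1]

end Char

/-! ### Transfer of `GoodParam` along isometric extensions -/

section Transfer
variable {K K' : Type*} [NormedField K] [IsUltrametricDist K]
  [NormedField K'] [IsUltrametricDist K']

lemma constantCoeff_map' {A B : Type*} [CommRing A] [CommRing B] (ι : A →+* B)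
    (f : PowerSeries A) :
    constantCoeff (PowerSeries.map ι f) = ι (constantCoeff f) := by
  rw [← coeff_zero_eq_constantCoeff_apply, PowerSeries.coeff_map,
    coeff_zero_eq_constantCoeff_apply]

lemma coeff_X_norm (n : ℕ) {r : ℝ} (hr : 0 < r) :
    ‖coeff n (X : PowerSeries K)‖ * r ^ n ≤ r := by
  rw [coeff_X]
  rcases eq_or_ne n 1 with h | h
  · rw [if_pos h, h, pow_one, norm_one, one_mul]
  · rw [if_neg h, norm_zero, zero_mul]
    exact le_of_lt hr

lemma goodParam_map (ι : K →+* K') (hι : ∀ x : K, ‖ι x‖ = ‖x‖)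
    {φ : PowerSeries K} {r : ℝ} (h : GoodParam φ r) :
    GoodParam (PowerSeries.map ι φ) r := by
  obtain ⟨u, hu0, hu, hv, hcase⟩ := h
  have hcomp : comp (PowerSeries.map ι φ) (PowerSeries.map ι u)
      = PowerSeries.map ι (comp φ u) := (map_comp ι φ u).symm
  refine ⟨PowerSeries.map ι u, ?_, ?_, ?_, ?_⟩
  · rw [constantCoeff_map' ι u, hu0, map_zero]
  · intro n; rw [PowerSeries.coeff_map, hι]; exact hu n
  · intro n; rw [hcomp, PowerSeries.coeff_map, hι]; exact hv n
  · rcases hcase with h | h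
    · left; rw [PowerSeries.coeff_map, hι]; exact h
    · right; rw [hcomp, PowerSeries.coeff_map, hι]; exact h

lemma goodParam_descent (ι : K →+* K') (hι : ∀ x : K, ‖ι x‖ = ‖x‖)
    {φ : PowerSeries K} (hφ0 : constantCoeff φ = 0) {r : ℝ} (hr : 0 < r)
    (h : GoodParam (PowerSeries.map ι φ) r) : GoodParam φ r := by
  obtain ⟨u, hu0, hu, hv, hcase⟩ := h
  have hφ'0 : constantCoeff (PowerSeries.map ι φ) = 0 := by
    rw [constantCoeff_map' ι φ, hφ0, map_zero]
  rcases hcase with hcs | hcs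
  · -- Case A : ‖u₁‖ = 1, then φ itself converges at radius r; take u = X.
    have hφn := descend hr hφ'0 hu0 hcs hu hv
    have hφn' : ∀ n, ‖coeff n φ‖ * r ^ n ≤ r := by
      intro n
      have := hφn n
      rwa [PowerSeries.coeff_map, hι] at this
    refine ⟨X, PowerSeries.constantCoeff_X, fun n => coeff_X_norm n hr, ?_, ?_⟩
    · rw [comp_X]; exact hφn'
    · left; rw [coeff_X, if_pos rfl, norm_one]
  · -- Case B : the graph is "vertical"; use the compositional inverse of φ.
    set v := comp (PowerSeries.map ι φ) u with hvdef
    have hv1 : ‖coeff 1 v‖ = 1 := hcs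
    have hφ1 : coeff 1 φ ≠ 0 := by
      intro hzero
      rw [hvdef, coeff_one_comp, PowerSeries.coeff_map, hzero, map_zero, zero_mul,
        norm_zero] at hv1
      exact zero_ne_one hv1
    set ψ := compInv φ with hψdef
    have hψ0 : constantCoeff ψ = 0 := compInv_zero φ
    have hInv : comp φ ψ = X := comp_compInv φ hφ0 hφ1
    have hInv2 : comp ψ φ = X := compInv_comp φ hφ0 hφ1
    have hψ'φ' : comp (PowerSeries.map ι ψ) (PowerSeries.map ι φ) = X := by
      rw [← map_comp, hInv2, PowerSeries.map_X]
    have hψ'0 : constantCoeff (PowerSeries.map ι ψ) = 0 := by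
      rw [constantCoeff_map' ι ψ, hψ0, map_zero]
    have hv0 : constantCoeff v = 0 := by
      rw [hvdef, constantCoeff_comp, hφ'0]
    have hcompu : comp (PowerSeries.map ι ψ) v = u := by
      rw [hvdef, ← comp_assoc _ _ _ hφ'0 hu0, hψ'φ', X_comp hu0]
    have hψn := descend hr hψ'0 hv0 hv1 hv (by rw [hcompu]; exact hu)
    have hψn' : ∀ n, ‖coeff n ψ‖ * r ^ n ≤ r := by
      intro n
      have := hψn n
      rwa [PowerSeries.coeff_map, hι] at this
    refine ⟨ψ, hψ0, hψn', ?_, ?_⟩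
    · rw [hInv]; exact fun n => coeff_X_norm n hr
    · right; rw [hInv, coeff_X, if_pos rfl, norm_one]

end Transfer

end NA

/-- **Invariance of the size under isometric extension of complete discretely valued fields**
(graph case of Proposition 3.4 of Bost–Chambert-Loir): let `ι : K → K'` be an isometric
embedding of complete nonarchimedean fields whose valuation rings are discrete valuation
rings. For a formal power series `φ ∈ K⟦X⟧` with zero constant term, the supremum of the
radii `r ∈ (0,1]` at which the graph of `φ` is analytically trivialized over `K` equals the
supremum of the radii at which the graph of `ι(φ) ∈ K'⟦X⟧` is analytically trivialized over
`K'`. -/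

theorem size_graph_invariant_under_isometric_extension
    {K K' : Type*}
    [NontriviallyNormedField K] [CompleteSpace K] [IsUltrametricDist K]
    [IsDiscreteValuationRing (NA.integers K)]
    [NontriviallyNormedField K'] [CompleteSpace K'] [IsUltrametricDist K']
    [IsDiscreteValuationRing (NA.integers K')]
    (ι : K →+* K') (hι : ∀ x : K, ‖ι x‖ = ‖x‖)
    (φ : PowerSeries K) (hφ0 : PowerSeries.constantCoeff φ = 0) :
    sSup {r : ℝ | r ∈ Set.Ioc (0 : ℝ) 1 ∧ NA.GraphTrivAt φ r}
      = sSup {r : ℝ | r ∈ Set.Ioc (0 : ℝ) 1 ∧ NA.GraphTrivAt (PowerSeries.map ι φ) r} := by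
  have hφ0' : PowerSeries.constantCoeff (PowerSeries.map ι φ) = 0 := by
    rw [NA.constantCoeff_map' ι φ, hφ0, map_zero]
  have key : ∀ r : ℝ, 0 < r →
      (NA.GraphTrivAt φ r ↔ NA.GraphTrivAt (PowerSeries.map ι φ) r) := by
    intro r hr
    rw [NA.graphTrivAt_iff_goodParam hφ0 hr, NA.graphTrivAt_iff_goodParam hφ0' hr]
    exact ⟨NA.goodParam_map ι hι, NA.goodParam_descent ι hι hφ0 hr⟩
  congr 1
  ext r
  simp only [Set.mem_setOf_eq, Set.mem_Ioc]
  constructor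
  · rintro ⟨⟨h1, h2⟩, h3⟩
    exact ⟨⟨h1, h2⟩, (key r h1).1 h3⟩
  · rintro ⟨⟨h1, h2⟩, h3⟩
    exact ⟨⟨h1, h2⟩, (key r h1).2 h3⟩
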